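/- (Fact 4 of the paper: reasoning by cases is unsound for conditional strong historical necessity.) There exist a formula α ∈ Φ_XY, formulas φ, ψ ∈ Φ_ConSHN-BT, a model M, a context C for M, an instant i and a timeline π ∈ AT(C) such that both [α]φ and [¬α]ψ hold at (M, C, π, i) but □φ ∨ □ψ does not hold at (M, C, π, i); concretely this is witnessed by α = p, φ = p, ψ = ¬p, the empty context, and a model with exactly two timelines π₁, π₂ where V(p) = {π₁[1]}, evaluated at (π₁, 1). -/

import Mathlib

namespace ConSHN

/-- Formulas of the language Φ_XY, over atomic propositions indexed by ℕ. -/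
inductive FXY : Type
  | atom : ℕ → FXY
  | bot  : FXY
  | neg  : FXY → FXY
  | conj : FXY → FXY → FXY
  | X    : FXY → FXY
  | Y    : FXY → FXY
  deriving DecidableEq

/-- Formulas of the language Φ_ConSHN-BT. -/
inductive F : Type
  | atom : ℕ → F
  | bot  : F
  | neg  : F → F
  | conj : F → F → F
  | X    : F → F
  | Y    : F → F
  | con  : FXY → F → F
  deriving DecidableEq

namespace FXY

def top : FXY := neg bot
def imp (a b : FXY) : FXY := neg (conj a (neg b))
def or (a b : FXY) : FXY := neg (conj (neg a) (neg b))
def iff (a b : FXY) : FXY := conj (imp a b) (imp b a)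

/-- n-fold application of X. -/
def Xn : ℕ → FXY → FXY
  | 0, a => a
  | n+1, a => X (Xn n a)

/-- n-fold application of Y. -/
def Yn : ℕ → FXY → FXY
  | 0, a => a
  | n+1, a => Y (Yn n a)

/-- The embedding of Φ_XY into Φ_ConSHN-BT. -/
def toF : FXY → F
  | atom p => .atom p
  | bot => .bot
  | neg a => .neg (toF a)
  | conj a b => .conj (toF a) (toF b)
  | X a => .X (toF a)
  | Y a => .Y (toF a)

/-- Purely propositional formulas (no occurrence of X or Y). -/
inductive IsPL : FXY → Prop
  | atom (p : ℕ) : IsPL (atom p)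
  | bot : IsPL bot
  | neg {a} : IsPL a → IsPL (neg a)
  | conj {a b} : IsPL a → IsPL b → IsPL (conj a b)

/-- The language Φ_N-XY : β ::= Xⁿp | Xⁿ⊥ | Yⁿp | Yⁿ⊥ | ¬β | (β ∧ β). -/
inductive NXY : FXY → Prop
  | xatom (n p : ℕ) : NXY (Xn n (atom p))
  | xbot (n : ℕ) : NXY (Xn n bot)
  | yatom (n p : ℕ) : NXY (Yn n (atom p))
  | ybot (n : ℕ) : NXY (Yn n bot)
  | neg {a} : NXY a → NXY (neg a)
  | conj {a b} : NXY a → NXY b → NXY (conj a b)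

end FXY

namespace F

def top : F := neg bot
def imp (a b : F) : F := neg (conj a (neg b))
def or (a b : F) : F := neg (conj (neg a) (neg b))
def iff (a b : F) : F := conj (imp a b) (imp b a)

/-- ⟨α⟩φ := ¬[α]¬φ -/
def dcon (α : FXY) (φ : F) : F := neg (con α (neg φ))

/-- □φ := [⊤]φ -/
def box (φ : F) : F := con FXY.top φ

/-- ◇φ := ¬□¬φ -/
def dia (φ : F) : F := neg (box (neg φ))

/-- Closed formulas of Φ_ConSHN-BT : χ ::= [α]φ | ¬χ | (χ ∧ χ). -/
inductive Closed : F → Prop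
  | con (α : FXY) (φ : F) : Closed (con α φ)
  | neg {χ} : Closed χ → Closed (neg χ)
  | conj {χ₁ χ₂} : Closed χ₁ → Closed χ₂ → Closed (conj χ₁ χ₂)

/-- The language Φ_Con-XY : φ ::= Xⁿp | Xⁿ⊥ | Yⁿp | Yⁿ⊥ | ¬φ | (φ ∧ φ) | [β]φ, β ∈ Φ_N-XY. -/
inductive ConXY : F → Prop
  | xatom (n p : ℕ) : ConXY (FXY.Xn n (.atom p)).toF
  | xbot (n : ℕ) : ConXY (FXY.Xn n .bot).toF
  | yatom (n p : ℕ) : ConXY (FXY.Yn n (.atom p)).toF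
  | ybot (n : ℕ) : ConXY (FXY.Yn n .bot).toF
  | neg {φ} : ConXY φ → ConXY (neg φ)
  | conj {φ ψ} : ConXY φ → ConXY ψ → ConXY (conj φ ψ)
  | con {β : FXY} {φ} : β.NXY → ConXY φ → ConXY (con β φ)

/-- The language Φ_One□-XY : φ ::= β | ¬φ | (φ ∧ φ) | □β, β ∈ Φ_N-XY. -/
inductive OneBox : F → Prop
  | base {β : FXY} : β.NXY → OneBox β.toF
  | neg {φ} : OneBox φ → OneBox (neg φ)
  | conj {φ ψ} : OneBox φ → OneBox ψ → OneBox (conj φ ψ)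
  | box {β : FXY} : β.NXY → OneBox (box β.toF)

end F

/-- A branching-time model. -/
structure Model where
  W : Type
  lt : W → W → Prop
  V : ℕ → Set W
  nonempty : Nonempty W
  serial : ∀ w, ∃ v, lt w v
  root : W
  reach : ∀ w : W, ∃! l : List W,
    List.Chain' lt l ∧ l.head? = some root ∧ l.getLast? = some w

/-- The set TL(M) of timelines of the model M. -/
def Timeline (M : Model) : Set (ℕ → M.W) :=
  {π | π 0 = M.root ∧ ∀ i, M.lt (π i) (π (i + 1))}

/-- AT(C): the acceptable timelines by a context C (AT(∅) = TL(M)). -/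
def AT (M : Model) (C : Set (Set (ℕ → M.W))) : Set (ℕ → M.W) :=
  Timeline M ∩ ⋂₀ C

/-- Truth of Φ_XY formulas at (M, π, i) (independent of contexts). -/
def satXY (M : Model) (π : ℕ → M.W) : ℕ → FXY → Prop
  | i, .atom p => π i ∈ M.V p
  | _, .bot => False
  | i, .neg a => ¬ satXY M π i a
  | i, .conj a b => satXY M π i a ∧ satXY M π i b
  | i, .X a => satXY M π (i + 1) a
  | i, .Y a => 0 < i ∧ satXY M π (i - 1) a

/-- The indefeasible ontic rule ⟨⟨α⟩⟩_i generated by α at instant i. -/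
def ruleOf (M : Model) (α : FXY) (i : ℕ) : Set (ℕ → M.W) :=
  {π | π ∈ Timeline M ∧ satXY M π i α}

/-- The update C + α@i of a context C with α at instant i. -/
def upd (M : Model) (C : Set (Set (ℕ → M.W))) (α : FXY) (i : ℕ) :
    Set (Set (ℕ → M.W)) :=
  insert (ruleOf M α i) C

/-- Truth of Φ_ConSHN-BT formulas at (M, C, π, i). -/
def sat (M : Model) : Set (Set (ℕ → M.W)) → (ℕ → M.W) → ℕ → F → Prop
  | _, π, i, .atom p => π i ∈ M.V p
  | _, _, _, .bot => False
  | C, π, i, .neg φ => ¬ sat M C π i φ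
  | C, π, i, .conj φ ψ => sat M C π i φ ∧ sat M C π i ψ
  | C, π, i, .X φ => sat M C π (i + 1) φ
  | C, π, i, .Y φ => 0 < i ∧ sat M C π (i - 1) φ
  | C, π, i, .con α φ =>
      ∀ π' ∈ AT M (upd M C α i), sat M (upd M C α i) π' i φ

/-- C is a context for M: a finite set of sets of timelines. -/
def IsContext (M : Model) (C : Set (Set (ℕ → M.W))) : Prop :=
  C.Finite ∧ ∀ R ∈ C, R ⊆ Timeline M

/-- Validity: truth at every contextualized pointed model. -/
def Valid (φ : F) : Prop :=
  ∀ (M : Model) (C : Set (Set (ℕ → M.W))) (π : ℕ → M.W) (i : ℕ),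
    IsContext M C → π ∈ AT M C → sat M C π i φ

/-- Satisfiability: truth at some contextualized pointed model. -/
def Satisfiable (φ : F) : Prop :=
  ∃ (M : Model) (C : Set (Set (ℕ → M.W))) (π : ℕ → M.W) (i : ℕ),
    IsContext M C ∧ π ∈ AT M C ∧ sat M C π i φ

/-- Propositional evaluation: ⊥, ¬, ∧ are interpreted, all other formulas
are treated as propositional atoms evaluated by v. -/
def evalProp (v : F → Prop) : F → Prop
  | .bot => False
  | .neg φ => ¬ evalProp v φ
  | .conj φ ψ => evalProp v φ ∧ evalProp v ψ
  | φ => v φ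

/-- φ is a propositional tautology. -/
def Taut (φ : F) : Prop := ∀ v : F → Prop, evalProp v φ

namespace Fact4

abbrev W := Option (Bool × ℕ)

def pred : W → W
  | none => none
  | some (_, 0) => none
  | some (b, n+1) => some (b, n)

def lt (v w : W) : Prop := w.isSome ∧ pred w = v

def g (b : Bool) : ℕ → List W
  | 0 => [none, some (b, 0)]
  | n+1 => g b n ++ [some (b, n+1)]

def f : W → List W
  | none => [none]
  | some (b, n) => g b n

lemma g_ne_nil (b : Bool) (n : ℕ) : g b n ≠ [] := by
  cases n <;> simp [g]

lemma head?_g (b : Bool) (n : ℕ) : (g b n).head? = some none := by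
  induction n with
  | zero => rfl
  | succ n ih => rw [g, List.head?_append_of_ne_nil _ (g_ne_nil b n)]; exact ih

lemma getLast?_g (b : Bool) (n : ℕ) : (g b n).getLast? = some (some (b, n)) := by
  cases n <;> simp [g]

lemma chain'_g (b : Bool) (n : ℕ) : List.Chain' lt (g b n) := by
  induction n with
  | zero => exact List.isChain_pair.mpr ⟨rfl, rfl⟩
  | succ n ih =>
    rw [g]; unfold List.Chain'; rw [List.isChain_append]
    refine ⟨ih, List.isChain_singleton _, ?_⟩
    intro x hx y hy
    rw [getLast?_g] at hx
    cases hx; cases hy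
    exact ⟨rfl, rfl⟩

lemma f_spec (w : W) : List.Chain' lt (f w) ∧ (f w).head? = some none ∧
    (f w).getLast? = some w := by
  match w with
  | none => exact ⟨List.isChain_singleton _, rfl, rfl⟩
  | some (b, n) => exact ⟨chain'_g b n, head?_g b n, getLast?_g b n⟩

lemma f_uniq (l : List W) : ∀ w : W, List.Chain' lt l → l.head? = some none →
    l.getLast? = some w → l = f w := by
  induction l using List.reverseRecOn with
  | nil => intro w _ _ h; simp at h
  | append_singleton l x ih =>
    intro w hc hh hL
    rw [List.getLast?_append_of_ne_nil _ (by simp)] at hL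
    simp at hL
    subst hL
    match l, hh with
    | [], hh =>
      simp at hh; subst hh; rfl
    | (y :: l'), hh2 =>
      rw [List.head?_append_of_ne_nil _ (by simp)] at hh2
      unfold List.Chain' at hc; rw [List.isChain_append] at hc
      obtain ⟨hc1, _, hc2⟩ := hc
      have hlast : (y :: l').getLast? = some ((y :: l').getLast (by simp)) :=
        List.getLast?_eq_getLast _
      have hlt : lt ((y :: l').getLast (by simp)) x := by
        apply hc2 _ hlast x rfl
      obtain ⟨hs, hp⟩ := hlt
      obtain ⟨⟨b, n⟩, rfl⟩ := Option.isSome_iff_exists.mp hs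
      have ihl : (y :: l') = f (pred (some (b, n))) := by
        apply ih _ hc1 hh2
        rw [hlast, hp]
      cases n with
      | zero =>
        simp [pred, f] at ihl
        rw [ihl.1, ihl.2]; rfl
      | succ n =>
        simp [pred, f] at ihl
        rw [ihl]; rfl

def M : ConSHN.Model where
  W := W
  lt := lt
  V := fun p => if p = 0 then {some (true, 0)} else ∅
  nonempty := ⟨none⟩
  serial := by
    intro w
    match w with
    | none => exact ⟨some (true, 0), rfl, rfl⟩
    | some (b, n) => exact ⟨some (b, n+1), rfl, rfl⟩
  root := none
  reach := by
    intro w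
    refine ⟨f w, f_spec w, ?_⟩
    intro l ⟨h1, h2, h3⟩
    exact f_uniq l w h1 h2 h3

def tl (b : Bool) : ℕ → W
  | 0 => none
  | i+1 => some (b, i)

lemma tl_mem (b : Bool) : tl b ∈ ConSHN.Timeline M := by
  refine ⟨rfl, ?_⟩
  intro i
  cases i with
  | zero => exact ⟨rfl, rfl⟩
  | succ i => exact ⟨rfl, rfl⟩

end Fact4
end ConSHN

open ConSHN

/-- Fact 4: reasoning by cases is unsound for conditional strong historical
necessity: there are α, φ, ψ and a contextualized pointed model at which
[α]φ and [¬α]ψ hold but □φ ∨ □ψ fails. -/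
theorem fact_reasoning_by_cases_unsound :
    ∃ (α : FXY) (φ ψ : F) (M : Model) (C : Set (Set (ℕ → M.W)))
      (π : ℕ → M.W) (i : ℕ),
      IsContext M C ∧ π ∈ AT M C ∧
      sat M C π i (F.con α φ) ∧
      sat M C π i (F.con (.neg α) ψ) ∧
      ¬ sat M C π i (F.or (F.box φ) (F.box ψ)) := by
  refine ⟨.atom 0, .atom 0, .neg (.atom 0), Fact4.M, ∅, Fact4.tl true, 1,
    ⟨Set.finite_empty, by simp⟩, ⟨Fact4.tl_mem true, by simp; exact Set.mem_univ _⟩, ?_, ?_, ?_⟩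
  · -- [p]p
    intro π' hπ'
    have h : π' ∈ ruleOf Fact4.M (.atom 0) 1 := hπ'.2 _ (Set.mem_insert _ _)
    exact h.2
  · -- [¬p]¬p
    intro π' hπ'
    have h : π' ∈ ruleOf Fact4.M (.neg (.atom 0)) 1 := hπ'.2 _ (Set.mem_insert _ _)
    exact h.2
  · -- ¬(□p ∨ □¬p)
    simp only [F.or, F.box, sat]
    push_neg
    have hmem : ∀ b, Fact4.tl b ∈ AT Fact4.M (upd Fact4.M ∅ FXY.top 1) := by
      intro b
      refine ⟨Fact4.tl_mem b, ?_⟩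
      intro s hs
      rcases hs with rfl | hs
      · exact ⟨Fact4.tl_mem b, fun hf => hf⟩
      · simp at hs
    constructor
    · exact ⟨Fact4.tl false, hmem false, by simp [Fact4.M, Fact4.tl]; exact fun h => by cases Set.mem_singleton_iff.mp h⟩
    · exact ⟨Fact4.tl true, hmem true, by simp [Fact4.M, Fact4.tl]; exact Set.mem_singleton _⟩
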